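/- Let A : ℝ → ℝ be three times continuously differentiable and convex, η : ℝ → ℝ twice continuously differentiable and convex, and let q : ℝ → ℝ satisfy q'(u) = A'(u)·η'(u) for all u. Let u₊, u₋, ū₊, ū₋ ∈ ℝ satisfy u₊ ≤ u₋ and ū₊ ≤ ū₋, and set σ := σ(u₊,u₋). Then q(u₊;ū₊) − q(u₋;ū₋) − σ·(η(u₊|ū₊) − η(u₋|ū₋)) ≤ 0. -/

import Mathlib

open Set intervalIntegral

theorem entropy_dissipation_nonpos
    (A η q : ℝ → ℝ)
    (hA : ContDiff ℝ 3 A) (hA_conv : ConvexOn ℝ Set.univ A)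
    (hη : ContDiff ℝ 2 η) (hη_conv : ConvexOn ℝ Set.univ η)
    (hq : ∀ u : ℝ, HasDerivAt q (deriv A u * deriv η u) u)
    (σ : ℝ → ℝ → ℝ)
    (hσ_off : ∀ v w : ℝ, v ≠ w → σ v w = (A v - A w) / (v - w))
    (hσ_diag : ∀ v : ℝ, σ v v = deriv A v)
    (up um bup bum : ℝ) (h1 : up ≤ um) (h2 : bup ≤ bum) :
    ((q up - q bup - deriv η bup * (A up - A bup))
        - (q um - q bum - deriv η bum * (A um - A bum)))
      - σ up um * ((η up - η bup - deriv η bup * (up - bup))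
        - (η um - η bum - deriv η bum * (um - bum))) ≤ 0 := by
  set σ0 := σ up um with hσ0
  -- regularity facts
  have hAd : Differentiable ℝ A := hA.differentiable (by norm_num)
  have hηd : Differentiable ℝ η := hη.differentiable (by norm_num)
  have hη1 : ContDiff ℝ 1 (deriv η) :=
    ((contDiff_succ_iff_deriv (n := 1) (f := η)).mp (by norm_num [hη])).2.2
  have hdηd : Differentiable ℝ (deriv η) := hη1.differentiable one_ne_zero
  have hη2c : Continuous (deriv (deriv η)) := (contDiff_one_iff_deriv.mp hη1).2
  -- second derivative of η is nonnegative
  have hηmono : Monotone (deriv η) := by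
    have := hη_conv.monotoneOn_deriv (fun x _ => hηd x)
    exact monotoneOn_univ.mp this
  have hη2 : ∀ x, 0 ≤ deriv (deriv η) x := by
    intro x
    have ht := hasDerivAt_iff_tendsto_slope.mp (hdηd x).hasDerivAt
    refine ge_of_tendsto ht ?_
    filter_upwards [self_mem_nhdsWithin] with t ht'
    have htx : t ≠ x := ht'
    rw [slope_def_field]
    rcases lt_or_gt_of_ne htx with h | h
    · exact div_nonneg_iff.mpr (Or.inr ⟨by simpa using hηmono h.le, by linarith⟩)
    · exact div_nonneg (by simpa using hηmono h.le) (by linarith)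
  -- the key function
  set φ : ℝ → ℝ := fun b => deriv (deriv η) b * ((σ0 * up - A up) - (σ0 * b - A b)) with hφ
  have hφc : Continuous φ := hη2c.mul (by fun_prop)
  have hφi : ∀ a b : ℝ, IntervalIntegrable φ MeasureTheory.volume a b :=
    fun a b => hφc.intervalIntegrable a b
  -- equality of the two constants
  have hc : σ0 * up - A up = σ0 * um - A um := by
    rcases eq_or_lt_of_le h1 with rfl | hlt
    · rfl
    · have hne : up - um ≠ 0 := sub_ne_zero.mpr hlt.ne
      have hs : σ0 * (up - um) = A up - A um := by
        rw [hσ0, hσ_off up um hlt.ne]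
        exact div_mul_cancel₀ _ hne
      linarith [hs]
  -- sign facts for (σ0 * b - A b) compared with the constant
  have houtL : ∀ b, b ≤ up → σ0 * b - A b ≤ σ0 * up - A up := by
    intro b hb
    rcases eq_or_lt_of_le hb with rfl | hb
    · exact le_rfl
    rcases eq_or_lt_of_le h1 with rfl | hlt
    · -- up = um : tangent line
      have hder := hA_conv.slope_le_deriv (mem_univ b) (mem_univ up) hb (hAd up)
      rw [slope_def_field] at hder
      rw [hσ0, hσ_diag up]
      have hpos : (0:ℝ) < up - b := by linarith
      have := (div_le_iff₀ hpos).mp hder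
      nlinarith
    · have hmem1 : b ∈ univ \ {up} := ⟨mem_univ b, by simp [hb.ne]⟩
      have hmem2 : um ∈ univ \ {up} := ⟨mem_univ um, by simp [hlt.ne']⟩
      have hsl := hA_conv.slope_mono (mem_univ up) hmem1 hmem2 (by linarith)
      rw [slope_def_field, slope_def_field] at hsl
      have hs : (A um - A up) / (um - up) = σ0 := by
        rw [hσ0, hσ_off up um hlt.ne]
        rw [div_eq_div_iff (by linarith) (by linarith)]
        ring
      rw [hs] at hsl
      have hneg : b - up < 0 := by linarith
      have := (div_le_iff_of_neg hneg).mp hsl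
      nlinarith
  have houtR : ∀ b, um ≤ b → σ0 * b - A b ≤ σ0 * um - A um := by
    intro b hb
    rcases eq_or_lt_of_le hb with rfl | hb
    · exact le_rfl
    rcases eq_or_lt_of_le h1 with rfl | hlt
    · have hder := hA_conv.deriv_le_slope (mem_univ up) (mem_univ b) hb (hAd up)
      rw [slope_def_field] at hder
      rw [hσ0, hσ_diag up]
      have hpos : (0:ℝ) < b - up := by linarith
      have := (le_div_iff₀ hpos).mp hder
      nlinarith
    · have hmem1 : up ∈ univ \ {um} := ⟨mem_univ up, by simp [hlt.ne]⟩
      have hmem2 : b ∈ univ \ {um} := ⟨mem_univ b, by simp [hb.ne']⟩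
      have hsl := hA_conv.slope_mono (mem_univ um) hmem1 hmem2 (by linarith)
      rw [slope_def_field, slope_def_field] at hsl
      have hs : (A up - A um) / (up - um) = σ0 := by
        rw [hσ0, hσ_off up um hlt.ne]
      rw [hs] at hsl
      have hpos : (0:ℝ) < b - um := by linarith
      have := (le_div_iff₀ hpos).mp hsl
      nlinarith
  have hin : ∀ b, up ≤ b → b ≤ um → σ0 * up - A up ≤ σ0 * b - A b := by
    intro b hbl hbr
    rcases eq_or_lt_of_le hbl with rfl | hbl
    · exact le_rfl
    have hlt : up < um := lt_of_lt_of_le hbl hbr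
    have hmem1 : b ∈ univ \ {up} := ⟨mem_univ b, by simp [hbl.ne']⟩
    have hmem2 : um ∈ univ \ {up} := ⟨mem_univ um, by simp [hlt.ne']⟩
    have hsl := hA_conv.slope_mono (mem_univ up) hmem1 hmem2 hbr
    rw [slope_def_field, slope_def_field] at hsl
    have hs : (A um - A up) / (um - up) = σ0 := by
      rw [hσ0, hσ_off up um hlt.ne]
      rw [div_eq_div_iff (by linarith) (by linarith)]
      ring
    rw [hs] at hsl
    have hpos : (0:ℝ) < b - up := by linarith
    have := (div_le_iff₀ hpos).mp hsl
    nlinarith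
  -- fundamental theorem of calculus for the relative entropy dissipation
  have mk : ∀ u a : ℝ, σ0 * u - A u = σ0 * up - A up →
      ∫ t in u..a, φ t = (q u - q a - deriv η a * (A u - A a))
        - σ0 * (η u - η a - deriv η a * (u - a)) := by
    intro u a hu
    have h := intervalIntegral.integral_eq_sub_of_hasDerivAt
      (f := fun x => q u - q x - deriv η x * (A u - A x)
        - σ0 * (η u - η x - deriv η x * (u - x)))
      (f' := φ) (a := u) (b := a) ?_ (hφi u a)
    · rw [h]; ring
    · intro t _
      have hqt := hq t
      have hAt : HasDerivAt A (deriv A t) t := (hAd t).hasDerivAt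
      have hηt : HasDerivAt η (deriv η t) t := (hηd t).hasDerivAt
      have hη't : HasDerivAt (deriv η) (deriv (deriv η) t) t := (hdηd t).hasDerivAt
      have t1 : HasDerivAt (fun x => q u - q x) (-(deriv A t * deriv η t)) t :=
        hqt.const_sub (q u)
      have t2 : HasDerivAt (fun x => A u - A x) (-(deriv A t)) t := hAt.const_sub (A u)
      have t3 : HasDerivAt (fun x => deriv η x * (A u - A x))
          (deriv (deriv η) t * (A u - A t) + deriv η t * (-(deriv A t))) t := hη't.mul t2
      have t4 : HasDerivAt (fun x => η u - η x) (-(deriv η t)) t := hηt.const_sub (η u)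
      have t5 : HasDerivAt (fun x : ℝ => u - x) (-1) t := (hasDerivAt_id t).const_sub u
      have t6 : HasDerivAt (fun x => deriv η x * (u - x))
          (deriv (deriv η) t * (u - t) + deriv η t * (-1)) t := hη't.mul t5
      have t8 : HasDerivAt (fun x => σ0 * (η u - η x - deriv η x * (u - x)))
          (σ0 * (-(deriv η t) - (deriv (deriv η) t * (u - t) + deriv η t * (-1)))) t :=
        (t4.sub t6).const_mul σ0
      have H := (t1.sub t3).sub t8
      convert H using 1
      show deriv (deriv η) t * ((σ0 * up - A up) - (σ0 * t - A t)) = _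
      rw [← hu]
      ring
      rfl
  -- rewrite the goal as a difference of integrals
  have hI : ((q up - q bup - deriv η bup * (A up - A bup))
        - (q um - q bum - deriv η bum * (A um - A bum)))
      - σ0 * ((η up - η bup - deriv η bup * (up - bup))
        - (η um - η bum - deriv η bum * (um - bum)))
      = (∫ t in up..bup, φ t) - ∫ t in um..bum, φ t := by
    rw [mk up bup rfl, mk um bum hc.symm]
    ring
  rw [hI]
  -- sign lemmas for integrals of φ
  have posInt : ∀ a b : ℝ, a ≤ b → (b ≤ up ∨ um ≤ a) → 0 ≤ ∫ t in a..b, φ t := by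
    intro a b hab hcase
    apply intervalIntegral.integral_nonneg hab
    intro t ht
    rcases hcase with h | h
    · exact mul_nonneg (hη2 t) (by have := houtL t (le_trans ht.2 h); linarith)
    · exact mul_nonneg (hη2 t) (by have := houtR t (le_trans h ht.1); linarith [hc])
  have negInt : ∀ a b : ℝ, up ≤ a → a ≤ b → b ≤ um → (∫ t in a..b, φ t) ≤ 0 := by
    intro a b ha hab hb
    have hneg : 0 ≤ ∫ t in a..b, -φ t := by
      apply intervalIntegral.integral_nonneg hab
      intro t ht
      have hφt : φ t ≤ 0 := mul_nonpos_iff.mpr (Or.inl ⟨hη2 t,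
        by have := hin t (le_trans ha ht.1) (le_trans ht.2 hb); linarith⟩)
      linarith
    rw [intervalIntegral.integral_neg] at hneg
    linarith
  -- main inequality
  have add1 : (∫ t in up..bup, φ t) + ∫ t in bup..bum, φ t = ∫ t in up..bum, φ t :=
    intervalIntegral.integral_add_adjacent_intervals (hφi _ _) (hφi _ _)
  have add2 : (∫ t in up..um, φ t) + ∫ t in um..bum, φ t = ∫ t in up..bum, φ t :=
    intervalIntegral.integral_add_adjacent_intervals (hφi _ _) (hφi _ _)
  have main : (∫ t in up..um, φ t) ≤ ∫ t in bup..bum, φ t := by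
    rcases le_total bum up with hc1 | hc1
    · exact le_trans (negInt up um le_rfl h1 le_rfl) (posInt bup bum h2 (Or.inl hc1))
    rcases le_total um bup with hc2 | hc2
    · exact le_trans (negInt up um le_rfl h1 le_rfl) (posInt bup bum h2 (Or.inr hc2))
    set a := max up bup with ha
    set b := min um bum with hb
    have hab : a ≤ b := max_le (le_min h1 hc1) (le_min hc2 h2)
    have d1a : (∫ t in a..b, φ t) + ∫ t in b..um, φ t = ∫ t in a..um, φ t :=
      intervalIntegral.integral_add_adjacent_intervals (hφi _ _) (hφi _ _)
    have d1b : (∫ t in up..a, φ t) + ∫ t in a..um, φ t = ∫ t in up..um, φ t :=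
      intervalIntegral.integral_add_adjacent_intervals (hφi _ _) (hφi _ _)
    have d2a : (∫ t in a..b, φ t) + ∫ t in b..bum, φ t = ∫ t in a..bum, φ t :=
      intervalIntegral.integral_add_adjacent_intervals (hφi _ _) (hφi _ _)
    have d2b : (∫ t in bup..a, φ t) + ∫ t in a..bum, φ t = ∫ t in bup..bum, φ t :=
      intervalIntegral.integral_add_adjacent_intervals (hφi _ _) (hφi _ _)
    have n1 : (∫ t in up..a, φ t) ≤ 0 := negInt up a le_rfl (le_max_left _ _)
      (max_le h1 hc2)
    have n2 : (∫ t in b..um, φ t) ≤ 0 := negInt b um (le_min h1 hc1) (min_le_left _ _)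
      le_rfl
    have p1 : 0 ≤ ∫ t in bup..a, φ t := by
      rcases le_total bup up with h' | h'
      · rw [ha, max_eq_left h']
        exact posInt bup up h' (Or.inl le_rfl)
      · rw [ha, max_eq_right h']
        simp
    have p2 : 0 ≤ ∫ t in b..bum, φ t := by
      rcases le_total um bum with h' | h'
      · rw [hb, min_eq_left h']
        exact posInt um bum h' (Or.inr le_rfl)
      · rw [hb, min_eq_right h']
        simp
    linarith
  linarith
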